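/- For every α ∈ (0, 3/8) there exists a constant C = C(α,T) > 0 such that for all x ∈ [0,π] and all 0 ≤ s < t ≤ T, ∫_0^s ∫_0^π |ΔG_{t−r}(x,z) − ΔG_{s−r}(x,z)| dz dr ≤ C (t−s)^{α}. -/

import Mathlib

/-- `φ_j(x) = √(2/π)·sin(jx)`. -/
noncomputable def phi (j : ℕ) (x : ℝ) : ℝ := Real.sqrt (2 / Real.pi) * Real.sin (j * x)

/-- `ΔG_t(x,y) = Σ_{j=1}^∞ (−j²) e^{−j⁴t} φ_j(x) φ_j(y)`, the Laplacian (in the first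
spatial variable) of the Green function of `∂_t + Δ²` on `(0,π)` with DBCs. -/
noncomputable def DG (t x y : ℝ) : ℝ :=
  ∑' j : ℕ, -(((j : ℝ) + 1) ^ 2) * Real.exp (-((j : ℝ) + 1) ^ 4 * t)
    * phi (j + 1) x * phi (j + 1) y

open Real MeasureTheory intervalIntegral

lemma phi_cont (j : ℕ) : Continuous (phi j) := by
  unfold phi
  exact continuous_const.mul (Real.continuous_sin.comp (continuous_const.mul continuous_id))

lemma phi_abs_le (j : ℕ) (x : ℝ) : |phi j x| ≤ 1 := by
  have h1 : Real.sqrt (2 / Real.pi) ≤ 1 := by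
    rw [show (1:ℝ) = Real.sqrt 1 by simp]
    apply Real.sqrt_le_sqrt
    rw [div_le_one Real.pi_pos]
    linarith [Real.pi_gt_three]
  have h2 : |Real.sin ((j:ℝ) * x)| ≤ 1 := Real.abs_sin_le_one _
  calc |phi j x| = |Real.sqrt (2/Real.pi)| * |Real.sin ((j:ℝ)*x)| := abs_mul _ _
    _ ≤ 1 * 1 := by
        apply mul_le_mul _ h2 (abs_nonneg _) zero_le_one
        rwa [abs_of_nonneg (Real.sqrt_nonneg _)]
    _ = 1 := by ring

lemma summable_aux (k : ℕ) {c : ℝ} (hc : 0 < c) :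
    Summable (fun j : ℕ => ((j:ℝ)+1)^k * Real.exp (-((j:ℝ)+1)^4 * c)) := by
  have hr : ‖Real.exp (-c)‖ < 1 := by
    rw [Real.norm_eq_abs, abs_of_pos (Real.exp_pos _)]
    exact Real.exp_lt_one_iff.2 (by linarith)
  have hg : Summable (fun n : ℕ => (n:ℝ)^k * Real.exp (-c) ^ n) :=
    summable_pow_mul_geometric_of_norm_lt_one k hr
  have hg' : Summable (fun j : ℕ => ((j:ℝ)+1)^k * Real.exp (-c) ^ (j+1)) := by
    have := (summable_nat_add_iff 1).2 hg
    simpa [Nat.cast_add] using this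
  apply Summable.of_nonneg_of_le (fun j => by positivity) _ hg'
  intro j
  apply mul_le_mul_of_nonneg_left _ (by positivity)
  rw [← Real.exp_nat_mul]
  apply Real.exp_le_exp.2
  push_cast
  have h1 : (1:ℝ) ≤ (j:ℝ)+1 := by have : (0:ℝ) ≤ (j:ℝ) := Nat.cast_nonneg j; linarith
  nlinarith [sq_nonneg ((j:ℝ)+1), pow_le_pow_right₀ h1 (show 1 ≤ 4 by norm_num)]

lemma summable_term {t : ℝ} (ht : 0 < t) (x z : ℝ) :
    Summable (fun j : ℕ => -(((j:ℝ)+1)^2) * Real.exp (-((j:ℝ)+1)^4 * t)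
      * phi (j+1) x * phi (j+1) z) := by
  apply Summable.of_norm_bounded (summable_aux 2 ht)
  intro j
  rw [Real.norm_eq_abs]
  have h1 := phi_abs_le (j+1) x
  have h2 := phi_abs_le (j+1) z
  have e := Real.exp_pos (-((j:ℝ)+1)^4 * t)
  have hn : (0:ℝ) ≤ ((j:ℝ)+1)^2 := by positivity
  calc |(-(((j:ℝ)+1)^2) * Real.exp (-((j:ℝ)+1)^4 * t) * phi (j+1) x * phi (j+1) z)|
      = ((j:ℝ)+1)^2 * Real.exp (-((j:ℝ)+1)^4 * t) * |phi (j+1) x| * |phi (j+1) z| := by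
        rw [abs_mul, abs_mul, abs_mul, abs_neg, abs_of_nonneg hn, abs_of_pos e]
    _ ≤ ((j:ℝ)+1)^2 * Real.exp (-((j:ℝ)+1)^4 * t) * 1 * 1 := by
        apply mul_le_mul (mul_le_mul le_rfl h1 (abs_nonneg _) (by positivity)) h2 (abs_nonneg _)
        positivity
    _ = ((j:ℝ)+1)^2 * Real.exp (-((j:ℝ)+1)^4 * t) := by ring

lemma cont_DG {t : ℝ} (ht : 0 < t) (x : ℝ) :
    Continuous (fun z => ∑' j : ℕ, -(((j:ℝ)+1)^2) * Real.exp (-((j:ℝ)+1)^4 * t)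
      * phi (j+1) x * phi (j+1) z) := by
  apply continuous_tsum _ (summable_aux 2 ht)
  · intro j z
    rw [Real.norm_eq_abs]
    have h1 := phi_abs_le (j+1) x
    have h2 := phi_abs_le (j+1) z
    have e := Real.exp_pos (-((j:ℝ)+1)^4 * t)
    have hn : (0:ℝ) ≤ ((j:ℝ)+1)^2 := by positivity
    rw [abs_mul, abs_mul, abs_mul, abs_neg, abs_of_nonneg hn, abs_of_pos e]
    calc ((j:ℝ)+1)^2 * Real.exp (-((j:ℝ)+1)^4 * t) * |phi (j+1) x| * |phi (j+1) z|
        ≤ ((j:ℝ)+1)^2 * Real.exp (-((j:ℝ)+1)^4 * t) * 1 * 1 := by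
          apply mul_le_mul (mul_le_mul le_rfl h1 (abs_nonneg _) (by positivity)) h2 (abs_nonneg _)
          positivity
      _ = ((j:ℝ)+1)^2 * Real.exp (-((j:ℝ)+1)^4 * t) := by ring
  · intro j
    apply Continuous.mul
    · exact continuous_const
    · unfold phi
      exact continuous_const.mul (Real.continuous_sin.comp (continuous_const.mul continuous_id))

lemma integral_cos_mul' {a : ℝ} (ha : a ≠ 0) :
    ∫ z in (0:ℝ)..Real.pi, Real.cos (a*z) = Real.sin (a*Real.pi)/a := by
  rw [integral_comp_mul_left (fun x => Real.cos x) ha]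
  simp [integral_cos, div_eq_inv_mul]

lemma sin_nat_sub_mul_pi (n m : ℕ) : Real.sin (((n:ℝ)-(m:ℝ))*Real.pi) = 0 := by
  have : ((n:ℝ)-(m:ℝ)) = (((n:ℤ)-(m:ℤ) : ℤ) : ℝ) := by push_cast; ring
  rw [this, Real.sin_int_mul_pi]

lemma sin_nat_add_mul_pi (n m : ℕ) : Real.sin (((n:ℝ)+(m:ℝ))*Real.pi) = 0 := by
  have : ((n:ℝ)+(m:ℝ)) = (((n:ℤ)+(m:ℤ) : ℤ) : ℝ) := by push_cast; ring
  rw [this, Real.sin_int_mul_pi]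

lemma sin_mul_sin_eq (n m : ℕ) (z : ℝ) :
    Real.sin ((n:ℝ)*z) * Real.sin ((m:ℝ)*z)
      = (Real.cos (((n:ℝ)-(m:ℝ))*z) - Real.cos (((n:ℝ)+(m:ℝ))*z))/2 := by
  rw [Real.cos_sub_cos]
  have e1 : ((((n:ℝ)-(m:ℝ))*z + ((n:ℝ)+(m:ℝ))*z)/2) = (n:ℝ)*z := by ring
  have e2 : ((((n:ℝ)-(m:ℝ))*z - ((n:ℝ)+(m:ℝ))*z)/2) = -((m:ℝ)*z) := by ring
  rw [e1, e2, Real.sin_neg]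
  ring

lemma orth_sin (n m : ℕ) (hn : n ≠ 0) (hm : m ≠ 0) :
    ∫ z in (0:ℝ)..Real.pi, Real.sin ((n:ℝ)*z) * Real.sin ((m:ℝ)*z)
      = if n = m then Real.pi/2 else 0 := by
  have key : ∀ z : ℝ, Real.sin ((n:ℝ)*z) * Real.sin ((m:ℝ)*z)
      = (Real.cos (((n:ℝ)-(m:ℝ))*z) - Real.cos (((n:ℝ)+(m:ℝ))*z))/2 := sin_mul_sin_eq n m
  simp_rw [key]
  have hint1 : IntervalIntegrable (fun z => Real.cos (((n:ℝ)-(m:ℝ))*z)) MeasureTheory.volume 0 Real.pi := by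
    apply Continuous.intervalIntegrable; fun_prop
  have hint2 : IntervalIntegrable (fun z => Real.cos (((n:ℝ)+(m:ℝ))*z)) MeasureTheory.volume 0 Real.pi := by
    apply Continuous.intervalIntegrable; fun_prop
  rw [intervalIntegral.integral_div, intervalIntegral.integral_sub hint1 hint2]
  have hadd : ((n:ℝ)+(m:ℝ)) ≠ 0 := by
    have : (0:ℝ) < (n:ℝ)+(m:ℝ) := by
      have : 0 < n := Nat.pos_of_ne_zero hn
      push_cast
      have : (1:ℝ) ≤ (n:ℝ) := by exact_mod_cast this
      have : (0:ℝ) ≤ (m:ℝ) := Nat.cast_nonneg m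
      linarith
    linarith
  rw [integral_cos_mul' hadd, sin_nat_add_mul_pi]
  by_cases h : n = m
  · subst h
    simp only [sub_self, zero_mul, Real.cos_zero, if_pos rfl]
    rw [intervalIntegral.integral_const]
    simp
  · have hsub : ((n:ℝ)-(m:ℝ)) ≠ 0 := by
      intro hc
      apply h
      have : (n:ℝ) = (m:ℝ) := by linarith
      exact_mod_cast this
    rw [integral_cos_mul' hsub, sin_nat_sub_mul_pi, if_neg h]
    simp

lemma phi_sq : Real.sqrt (2/Real.pi) ^ 2 = 2/Real.pi := by
  rw [sq]
  exact Real.mul_self_sqrt (by positivity)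

lemma orth_phi (n m : ℕ) (hn : n ≠ 0) (hm : m ≠ 0) :
    ∫ z in (0:ℝ)..Real.pi, phi n z * phi m z = if n = m then 1 else 0 := by
  have key : ∀ z : ℝ, phi n z * phi m z
      = (2/Real.pi) * (Real.sin ((n:ℝ)*z) * Real.sin ((m:ℝ)*z)) := by
    intro z
    calc phi n z * phi m z
        = Real.sqrt (2/Real.pi)^2 * (Real.sin ((n:ℝ)*z) * Real.sin ((m:ℝ)*z)) := by
          unfold phi; ring
      _ = (2/Real.pi) * (Real.sin ((n:ℝ)*z) * Real.sin ((m:ℝ)*z)) := by rw [phi_sq]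
  simp_rw [key]
  rw [intervalIntegral.integral_const_mul, orth_sin n m hn hm]
  by_cases h : n = m
  · rw [if_pos h, if_pos h]
    field_simp
  · rw [if_neg h, if_neg h, mul_zero]

lemma one_sub_exp_le_rpow {a u : ℝ} (ha0 : 0 < a) (ha1 : a ≤ 1) (hu : 0 ≤ u) :
    1 - Real.exp (-u) ≤ u ^ a := by
  rcases eq_or_lt_of_le hu with h | h
  · rw [← h, Real.zero_rpow ha0.ne', neg_zero, Real.exp_zero]; norm_num
  · by_cases h1 : u ≤ 1
    · have e1 : 1 - Real.exp (-u) ≤ u := by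
        have := Real.add_one_le_exp (-u)
        linarith
      have e2 : u ≤ u ^ a := by
        calc u = u ^ (1:ℝ) := (Real.rpow_one u).symm
          _ ≤ u ^ a := Real.rpow_le_rpow_of_exponent_ge h h1 ha1
      linarith
    · have e1 : 1 - Real.exp (-u) ≤ 1 := by
        have := (Real.exp_pos (-u)).le
        linarith
      have e2 : (1:ℝ) ≤ u ^ a := Real.one_le_rpow (by linarith) ha0.le
      linarith

lemma rpow_le_exp_of_le_one {b v : ℝ} (hb0 : 0 ≤ b) (hb1 : b ≤ 1) (hv : 0 ≤ v) :
    v ^ b ≤ Real.exp v := by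
  by_cases h1 : v ≤ 1
  · calc v ^ b ≤ 1 := Real.rpow_le_one hv h1 hb0
      _ ≤ Real.exp v := by
        rw [show (1:ℝ) = Real.exp 0 by simp]
        exact Real.exp_le_exp.2 hv
  · push_neg at h1
    calc v ^ b ≤ v ^ (1:ℝ) := Real.rpow_le_rpow_of_exponent_le h1.le hb1
      _ = v := Real.rpow_one v
      _ ≤ Real.exp v := by have := Real.add_one_le_exp v; linarith

lemma mul_exp_neg_le {v : ℝ} (hv : 0 ≤ v) : v * Real.exp (-v) ≤ 2 * Real.exp (-v/2) := by
  have key : v ≤ 2 * Real.exp (v/2) := by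
    have := Real.add_one_le_exp (v/2)
    nlinarith [Real.exp_pos (v/2)]
  have e1 : Real.exp (v/2) * Real.exp (-v) = Real.exp (-v/2) := by
    rw [← Real.exp_add]; ring_nf
  calc v * Real.exp (-v) ≤ 2 * Real.exp (v/2) * Real.exp (-v) :=
        mul_le_mul_of_nonneg_right key (Real.exp_pos _).le
    _ = 2 * Real.exp (-v/2) := by rw [mul_assoc, e1]

lemma rpow_quarter_le {v : ℝ} (hv : 0 ≤ v) : v ^ ((1:ℝ)/4) ≤ 1 + v := by
  by_cases h1 : v ≤ 1
  · have := Real.rpow_le_one hv h1 (by norm_num : (0:ℝ) ≤ 1/4)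
    linarith
  · push_neg at h1
    calc v ^ ((1:ℝ)/4) ≤ v ^ (1:ℝ) :=
          Real.rpow_le_rpow_of_exponent_le h1.le (by norm_num)
      _ = v := Real.rpow_one v
      _ ≤ 1 + v := by linarith

lemma tsum_exp_le {d : ℝ} (hd : 0 < d) :
    ∑' j : ℕ, Real.exp (-(((j:ℝ)+1) * d)) ≤ 1/d := by
  have hr0 : (0:ℝ) ≤ Real.exp (-d) := (Real.exp_pos _).le
  have hr1 : Real.exp (-d) < 1 := Real.exp_lt_one_iff.2 (by linarith)
  have key : ∀ j : ℕ, Real.exp (-(((j:ℝ)+1) * d)) = Real.exp (-d) * Real.exp (-d) ^ j := by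
    intro j
    rw [← Real.exp_nat_mul, ← Real.exp_add]
    congr 1
    ring
  simp_rw [key]
  rw [tsum_mul_left, tsum_geometric_of_lt_one hr0 hr1]
  have h2 : 0 < 1 - Real.exp (-d) := by linarith
  have hmul : Real.exp (-d) * Real.exp d = 1 := by rw [← Real.exp_add]; simp
  have haux := mul_le_mul_of_nonneg_left (Real.add_one_le_exp d) hr0
  -- e^{-d}(d+1) ≤ e^{-d} e^{d} = 1
  rw [hmul] at haux
  rw [show Real.exp (-d) * (1 - Real.exp (-d))⁻¹ = Real.exp (-d) / (1 - Real.exp (-d)) by ring,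
    div_le_div_iff₀ h2 hd]
  nlinarith

lemma summable_exp_geo {c : ℝ} (hc : 0 < c) :
    Summable (fun j : ℕ => Real.exp (-(((j:ℝ)+1) * c))) := by
  have key : ∀ j : ℕ, Real.exp (-(((j:ℝ)+1) * c)) = Real.exp (-c) * Real.exp (-c) ^ j := by
    intro j
    rw [← Real.exp_nat_mul, ← Real.exp_add]
    congr 1
    ring
  simp_rw [key]
  exact (summable_geometric_of_lt_one (Real.exp_pos _).le
    (Real.exp_lt_one_iff.2 (by linarith))).mul_left _

lemma sum_bound {a σ δ : ℝ} (ha0 : 0 < a) (ha1 : a < 3/8) (hσ : 0 < σ) (hδ : 0 < δ) :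
    ∑' j : ℕ, ((j:ℝ)+1)^4 * Real.exp (-(((j:ℝ)+1)^4 * σ)) ^ 2
        * (1 - Real.exp (-(((j:ℝ)+1)^4 * δ)))^2
      ≤ (2 * Real.exp 1 * 2 ^ ((1:ℝ)/4)) * δ ^ (2*a) * σ ^ (-(2*a) - 5/4) := by
  set c₀ : ℝ := (σ/2) ^ ((1:ℝ)/4) with hc₀def
  have hc₀ : 0 < c₀ := Real.rpow_pos_of_pos (by linarith) _
  set g : ℕ → ℝ := fun j => ((j:ℝ)+1)^4 * Real.exp (-(((j:ℝ)+1)^4 * σ)) ^ 2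
        * (1 - Real.exp (-(((j:ℝ)+1)^4 * δ)))^2 with hgdef
  set K : ℝ := 2 * Real.exp 1 * δ ^ (2*a) * (σ ^ (-(2*a)) * σ⁻¹) with hKdef
  have hK0 : 0 ≤ K := by
    rw [hKdef]
    have := Real.exp_pos (1:ℝ)
    have := Real.rpow_pos_of_pos hδ (2*a)
    have := Real.rpow_pos_of_pos hσ (-(2*a))
    positivity
  set h : ℕ → ℝ := fun j => K * Real.exp (-(((j:ℝ)+1) * c₀)) with hhdef
  -- per-term bound
  have hterm : ∀ j, g j ≤ h j := by
    intro j
    set n : ℝ := (j:ℝ)+1 with hn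
    have hn1 : (1:ℝ) ≤ n := by
      rw [hn]; have : (0:ℝ) ≤ (j:ℝ) := Nat.cast_nonneg j; linarith
    have hn0 : (0:ℝ) < n := by linarith
    set A : ℝ := n^4 with hA
    have hA1 : (1:ℝ) ≤ A := by
      rw [hA]
      calc (1:ℝ) = 1^4 := by norm_num
        _ ≤ n^4 := pow_le_pow_left₀ (by norm_num) hn1 4
    have hA0 : (0:ℝ) < A := by linarith
    -- step 1: (1 - e^{-Aδ})² ≤ (Aδ)^{2a}
    have h2a1 : 2*a ≤ 1 := by linarith
    have step1 : (1 - Real.exp (-(A * δ)))^2 ≤ (A*δ) ^ (2*a) := by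
      have hb := one_sub_exp_le_rpow ha0 (by linarith) (by positivity : (0:ℝ) ≤ A*δ)
      have hlhs : 0 ≤ 1 - Real.exp (-(A*δ)) := by
        have : Real.exp (-(A*δ)) ≤ 1 := Real.exp_le_one_iff.2 (by nlinarith)
        linarith
      have hsq : (1 - Real.exp (-(A * δ)))^2 ≤ ((A*δ)^a)^2 := by
        apply pow_le_pow_left₀ hlhs hb
      calc (1 - Real.exp (-(A * δ)))^2 ≤ ((A*δ)^a)^2 := hsq
        _ = (A*δ) ^ (2*a) := by
            rw [← Real.rpow_natCast ((A*δ)^a) 2, ← Real.rpow_mul (by positivity)]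
            norm_num [mul_comm]
    -- step 2/3 : A^{2a} ≤ σ^{-2a} e^{Aσ}
    have step3 : A ^ (2*a) ≤ σ ^ (-(2*a)) * Real.exp (A*σ) := by
      have hb := rpow_le_exp_of_le_one (by linarith : (0:ℝ) ≤ 2*a) h2a1
        (by positivity : (0:ℝ) ≤ A*σ)
      rw [Real.mul_rpow hA0.le hσ.le] at hb
      have hσr : 0 < σ ^ (2*a) := Real.rpow_pos_of_pos hσ _
      have hinv : σ ^ (-(2*a)) * σ ^ (2*a) = 1 := by
        rw [← Real.rpow_add hσ]; norm_num
      calc A ^ (2*a) = (σ ^ (-(2*a)) * σ ^ (2*a)) * A ^ (2*a) := by rw [hinv, one_mul]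
        _ = σ ^ (-(2*a)) * (A ^ (2*a) * σ ^ (2*a)) := by ring
        _ ≤ σ ^ (-(2*a)) * Real.exp (A*σ) := by
            apply mul_le_mul_of_nonneg_left hb (Real.rpow_pos_of_pos hσ _).le
    -- step 5 : A e^{-Aσ} ≤ σ⁻¹ 2 e^{-Aσ/2}
    have step5 : A * Real.exp (-(A*σ)) ≤ σ⁻¹ * (2 * Real.exp (-(A*σ)/2)) := by
      have hb := mul_exp_neg_le (by positivity : (0:ℝ) ≤ A*σ)
      have : A * Real.exp (-(A*σ)) = σ⁻¹ * ((A*σ) * Real.exp (-(A*σ))) := by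
        field_simp
      rw [this]
      exact mul_le_mul_of_nonneg_left hb (by positivity)
    -- step 6 : e^{-Aσ/2} ≤ e·e^{-n c₀}
    have step6 : Real.exp (-(A*σ)/2) ≤ Real.exp 1 * Real.exp (-(n * c₀)) := by
      have hq := rpow_quarter_le (by positivity : (0:ℝ) ≤ A*σ/2)
      have hEq : (A*σ/2) ^ ((1:ℝ)/4) = n * c₀ := by
        rw [hc₀def, hA, show n^4*σ/2 = n^4*(σ/2) by ring,
          Real.mul_rpow (by positivity) (by linarith)]
        congr 1
        rw [← Real.rpow_natCast n 4, ← Real.rpow_mul hn0.le]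
        norm_num
      rw [← Real.exp_add]
      apply Real.exp_le_exp.2
      rw [hEq] at hq
      linarith
    -- combine
    have hexp_comb : Real.exp (-(A*σ))^2 * Real.exp (A*σ) = Real.exp (-(A*σ)) := by
      rw [sq, ← Real.exp_add, ← Real.exp_add]; ring_nf
    have e1 : g j ≤ A * Real.exp (-(A*σ))^2 * ((A*δ) ^ (2*a)) := by
      rw [hgdef]
      simp only [← hn, ← hA]
      apply mul_le_mul_of_nonneg_left step1 (by positivity)
    have e2 : A * Real.exp (-(A*σ))^2 * ((A*δ) ^ (2*a))
        = δ ^ (2*a) * (A ^ (2*a) * (A * Real.exp (-(A*σ))^2)) := by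
      rw [Real.mul_rpow hA0.le hδ.le]; ring
    have e3 : A ^ (2*a) * (A * Real.exp (-(A*σ))^2)
        ≤ σ ^ (-(2*a)) * (A * Real.exp (-(A*σ))) := by
      calc A ^ (2*a) * (A * Real.exp (-(A*σ))^2)
          ≤ (σ ^ (-(2*a)) * Real.exp (A*σ)) * (A * Real.exp (-(A*σ))^2) := by
            apply mul_le_mul_of_nonneg_right step3 (by positivity)
        _ = σ ^ (-(2*a)) * (A * (Real.exp (-(A*σ))^2 * Real.exp (A*σ))) := by ring
        _ = σ ^ (-(2*a)) * (A * Real.exp (-(A*σ))) := by rw [hexp_comb]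
    have e4 : A * Real.exp (-(A*σ)) ≤ σ⁻¹ * (2 * (Real.exp 1 * Real.exp (-(n * c₀)))) := by
      refine step5.trans ?_
      apply mul_le_mul_of_nonneg_left _ (by positivity)
      exact mul_le_mul_of_nonneg_left step6 (by norm_num)
    calc g j ≤ A * Real.exp (-(A*σ))^2 * ((A*δ) ^ (2*a)) := e1
      _ = δ ^ (2*a) * (A ^ (2*a) * (A * Real.exp (-(A*σ))^2)) := e2
      _ ≤ δ ^ (2*a) * (σ ^ (-(2*a)) * (A * Real.exp (-(A*σ)))) := by
          apply mul_le_mul_of_nonneg_left e3 (Real.rpow_pos_of_pos hδ _).le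
      _ ≤ δ ^ (2*a) * (σ ^ (-(2*a)) * (σ⁻¹ * (2 * (Real.exp 1 * Real.exp (-(n * c₀)))))) := by
          apply mul_le_mul_of_nonneg_left
            (mul_le_mul_of_nonneg_left e4 (Real.rpow_pos_of_pos hσ _).le)
            (Real.rpow_pos_of_pos hδ _).le
      _ = h j := by rw [hhdef, hKdef, hn]; ring
  have hg_nonneg : ∀ j, 0 ≤ g j := by
    intro j; rw [hgdef]; positivity
  have hh_sum : Summable h := (summable_exp_geo hc₀).mul_left K
  have hg_sum : Summable g := Summable.of_nonneg_of_le hg_nonneg hterm hh_sum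
  calc ∑' j, g j ≤ ∑' j, h j := Summable.tsum_le_tsum hterm hg_sum hh_sum
    _ = K * ∑' j : ℕ, Real.exp (-(((j:ℝ)+1) * c₀)) := tsum_mul_left
    _ ≤ K * (1/c₀) := mul_le_mul_of_nonneg_left (tsum_exp_le hc₀) hK0
    _ = (2 * Real.exp 1 * 2 ^ ((1:ℝ)/4)) * δ ^ (2*a) * σ ^ (-(2*a) - 5/4) := by
        have h1 : (1:ℝ)/c₀ = 2 ^ ((1:ℝ)/4) * σ ^ (-((1:ℝ)/4)) := by
          rw [hc₀def, Real.div_rpow hσ.le (by norm_num : (0:ℝ) ≤ 2), one_div, inv_div,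
            div_eq_mul_inv, ← Real.rpow_neg hσ.le]
        have h2 : σ ^ (-(2*a)) * σ⁻¹ * σ ^ (-((1:ℝ)/4)) = σ ^ (-(2*a) - 5/4) := by
          rw [← Real.rpow_neg_one σ, ← Real.rpow_add hσ, ← Real.rpow_add hσ]
          congr 1
          ring
        calc K * (1/c₀)
            = (2 * Real.exp 1 * δ ^ (2*a)) * (σ ^ (-(2*a)) * σ⁻¹ * σ ^ (-((1:ℝ)/4)))
              * 2 ^ ((1:ℝ)/4) := by rw [hKdef, h1]; ring
          _ = (2 * Real.exp 1 * 2 ^ ((1:ℝ)/4)) * δ ^ (2*a) * σ ^ (-(2*a) - 5/4) := by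
              rw [h2]; ring

lemma parseval {c : ℕ → ℝ} (hc : Summable (fun j => |c j|)) :
    ∫ z in (0:ℝ)..Real.pi, (∑' j : ℕ, c j * phi (j+1) z)^2 = ∑' j : ℕ, (c j)^2 := by
  have hπ : (0:ℝ) ≤ Real.pi := Real.pi_pos.le
  set μ : Measure ℝ := volume.restrict (Set.Ioc 0 Real.pi) with hμ
  -- summable of norms
  have hnorm : ∀ z : ℝ, Summable (fun j : ℕ => ‖c j * phi (j+1) z‖) := by
    intro z
    apply Summable.of_nonneg_of_le (fun j => norm_nonneg _) _ hc
    intro j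
    rw [Real.norm_eq_abs, abs_mul]
    calc |c j| * |phi (j+1) z| ≤ |c j| * 1 :=
          mul_le_mul_of_nonneg_left (phi_abs_le _ _) (abs_nonneg _)
      _ = |c j| := mul_one _
  -- pointwise square as double sum
  have hsq : ∀ z : ℝ, (∑' j : ℕ, c j * phi (j+1) z)^2
      = ∑' p : ℕ × ℕ, (c p.1 * phi (p.1+1) z) * (c p.2 * phi (p.2+1) z) := by
    intro z
    rw [sq]
    exact tsum_mul_tsum_of_summable_norm (hnorm z) (hnorm z)
  simp_rw [hsq]
  -- swap integral and tsum
  set F : ℕ × ℕ → ℝ → ℝ := fun p z => (c p.1 * phi (p.1+1) z) * (c p.2 * phi (p.2+1) z) with hF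
  have hFcont : ∀ p, Continuous (F p) := by
    intro p
    exact ((continuous_const.mul (phi_cont _)).mul (continuous_const.mul (phi_cont _)))
  have hF_int : ∀ p, Integrable (F p) μ := fun p => (hFcont p).integrableOn_Ioc
  have hFbound : ∀ p z, ‖F p z‖ ≤ |c p.1| * |c p.2| := by
    intro p z
    rw [hF]
    simp only [Real.norm_eq_abs, abs_mul]
    calc |c p.1| * |phi (p.1+1) z| * (|c p.2| * |phi (p.2+1) z|)
        ≤ |c p.1| * 1 * (|c p.2| * 1) := by
          gcongr
          · exact phi_abs_le _ _
          · exact phi_abs_le _ _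
      _ = |c p.1| * |c p.2| := by ring
  have hcc : Summable (fun p : ℕ × ℕ => |c p.1| * |c p.2|) :=
    hc.mul_of_nonneg hc (fun j => abs_nonneg _) (fun j => abs_nonneg _)
  have hF_sum : Summable fun p => ∫ z, ‖F p z‖ ∂μ := by
    apply Summable.of_nonneg_of_le
      (fun p => integral_nonneg (fun z => norm_nonneg _))
      _ (hcc.mul_right Real.pi)
    intro p
    calc ∫ z, ‖F p z‖ ∂μ ≤ ∫ _, |c p.1| * |c p.2| ∂μ := by
          apply integral_mono (hF_int p).norm (integrable_const _)
          exact fun z => hFbound p z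
      _ = |c p.1| * |c p.2| * Real.pi := by
          rw [MeasureTheory.integral_const]
          simp [hμ, Real.volume_Ioc, ENNReal.toReal_ofReal hπ, mul_comm]
          rw [max_eq_left hπ]; ring
  have hswap := MeasureTheory.integral_tsum_of_summable_integral_norm hF_int hF_sum
  rw [intervalIntegral.integral_of_le hπ, ← hμ, ← hswap]
  -- compute each integral
  have hint : ∀ p : ℕ × ℕ, ∫ z, F p z ∂μ = if p.1 = p.2 then c p.1 * c p.2 else 0 := by
    intro p
    have : ∀ z, F p z = (c p.1 * c p.2) * (phi (p.1+1) z * phi (p.2+1) z) := by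
      intro z; rw [hF]; ring
    simp_rw [this]
    rw [MeasureTheory.integral_const_mul, hμ,
      ← intervalIntegral.integral_of_le hπ, orth_phi _ _ (Nat.succ_ne_zero _) (Nat.succ_ne_zero _)]
    by_cases h : p.1 = p.2
    · simp [h]
    · have : p.1 + 1 ≠ p.2 + 1 := by omega
      simp [h, this]
  simp_rw [hint]
  -- evaluate the double sum
  have hs : Summable (fun p : ℕ × ℕ => if p.1 = p.2 then c p.1 * c p.2 else 0) := by
    apply Summable.of_norm_bounded hcc
    intro p
    rw [Real.norm_eq_abs]
    by_cases h : p.1 = p.2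
    · rw [if_pos h, abs_mul]
    · rw [if_neg h, abs_zero]
      positivity
  rw [Summable.tsum_prod' hs (fun b => by
    apply summable_of_ne_finset_zero (s := {b})
    intro k hk
    simp only [Finset.mem_singleton] at hk
    exact if_neg (fun h => hk h.symm))]
  apply tsum_congr
  intro a
  have : ∀ b : ℕ, (if a = b then c a * c b else 0) = (if b = a then c a * c a else 0) := by
    intro b
    by_cases h : a = b
    · subst h; simp
    · rw [if_neg h, if_neg (fun hc => h hc.symm)]
  simp_rw [this]
  rw [tsum_ite_eq a (fun _ => c a * c a), sq]

lemma integral_abs_le_sqrt {f : ℝ → ℝ} (hf : Continuous f) {B : ℝ} (hB : 0 < B)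
    (h2 : ∫ z in (0:ℝ)..Real.pi, (f z)^2 ≤ B) :
    ∫ z in (0:ℝ)..Real.pi, |f z| ≤ Real.sqrt (Real.pi * B) := by
  have hπ := Real.pi_pos
  set c : ℝ := Real.sqrt B / Real.sqrt Real.pi with hc
  have hc0 : 0 < c := div_pos (Real.sqrt_pos.2 hB) (Real.sqrt_pos.2 hπ)
  have hpt : ∀ z, |f z| ≤ (f z)^2/(2*c) + c/2 := by
    intro z
    have h := sq_nonneg (|f z| - c)
    have habs : |f z|^2 = (f z)^2 := sq_abs (f z)
    rw [div_add_div _ _ (by positivity) (by norm_num), le_div_iff₀ (by positivity)]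
    nlinarith
  have hsq_int : IntervalIntegrable (fun z => (f z)^2) volume 0 Real.pi :=
    (hf.pow 2).intervalIntegrable _ _
  have hint1 : IntervalIntegrable (fun z => |f z|) volume 0 Real.pi :=
    hf.abs.intervalIntegrable _ _
  have hint2 : IntervalIntegrable (fun z => (f z)^2/(2*c) + c/2) volume 0 Real.pi := by
    apply IntervalIntegrable.add (hsq_int.div_const _) (intervalIntegrable_const)
  calc ∫ z in (0:ℝ)..Real.pi, |f z|
      ≤ ∫ z in (0:ℝ)..Real.pi, ((f z)^2/(2*c) + c/2) :=
        intervalIntegral.integral_mono_on hπ.le hint1 hint2 (fun z _ => hpt z)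
    _ = (∫ z in (0:ℝ)..Real.pi, (f z)^2)/(2*c) + Real.pi * (c/2) := by
        rw [intervalIntegral.integral_add (hsq_int.div_const _) (intervalIntegrable_const),
          intervalIntegral.integral_div, intervalIntegral.integral_const]
        simp [smul_eq_mul]
    _ ≤ B/(2*c) + Real.pi * (c/2) := by
        have h3 : (∫ z in (0:ℝ)..Real.pi, (f z)^2)/(2*c) ≤ B/(2*c) := by
          gcongr
        linarith
    _ = Real.sqrt (Real.pi * B) := by
        rw [hc, Real.sqrt_mul hπ.le]
        have hsB : Real.sqrt B ^ 2 = B := Real.sq_sqrt hB.le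
        have hsπ : Real.sqrt Real.pi ^ 2 = Real.pi := Real.sq_sqrt hπ.le
        have h1 : (0:ℝ) < Real.sqrt B := Real.sqrt_pos.2 hB
        have h2 : (0:ℝ) < Real.sqrt Real.pi := Real.sqrt_pos.2 hπ
        field_simp
        nlinarith

lemma Fr_bound {a x σ δ : ℝ} (ha0 : 0 < a) (ha1 : a < 3/8) (hσ : 0 < σ) (hδ : 0 < δ) :
    ∫ z in (0:ℝ)..Real.pi, |DG (σ+δ) x z - DG σ x z|
      ≤ Real.sqrt (Real.pi * (2 * Real.exp 1 * 2 ^ ((1:ℝ)/4))) * δ ^ a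
        * σ ^ (-(a + 5/8)) := by
  have hσδ : 0 < σ + δ := by linarith
  set K₀ : ℝ := 2 * Real.exp 1 * 2 ^ ((1:ℝ)/4) with hK₀
  have hK₀0 : 0 < K₀ := by
    rw [hK₀]
    have := Real.exp_pos (1:ℝ)
    have : (0:ℝ) < 2 ^ ((1:ℝ)/4) := Real.rpow_pos_of_pos (by norm_num) _
    positivity
  set c : ℕ → ℝ := fun j => -(((j:ℝ)+1)^2)
      * (Real.exp (-((j:ℝ)+1)^4 * (σ+δ)) - Real.exp (-((j:ℝ)+1)^4 * σ)) * phi (j+1) x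
    with hcdef
  -- expansion of the difference
  have hfeq : ∀ z, DG (σ+δ) x z - DG σ x z = ∑' j : ℕ, c j * phi (j+1) z := by
    intro z
    unfold DG
    rw [← Summable.tsum_sub (summable_term hσδ x z) (summable_term hσ x z)]
    apply tsum_congr
    intro j
    rw [hcdef]
    ring
  -- |c j| summable
  have hexp_le : ∀ j : ℕ, Real.exp (-((j:ℝ)+1)^4 * (σ+δ)) ≤ Real.exp (-((j:ℝ)+1)^4 * σ) := by
    intro j
    apply Real.exp_le_exp.2
    have h1 : (0:ℝ) ≤ ((j:ℝ)+1)^4 := by positivity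
    nlinarith
  have habs : Summable (fun j => |c j|) := by
    apply Summable.of_nonneg_of_le (fun j => abs_nonneg _) _ (summable_aux 2 hσ)
    intro j
    rw [hcdef]
    have h1 := phi_abs_le (j+1) x
    have h2 := hexp_le j
    have h3 := Real.exp_pos (-((j:ℝ)+1)^4 * (σ+δ))
    have h4 := Real.exp_pos (-((j:ℝ)+1)^4 * σ)
    rw [abs_mul, abs_mul, abs_neg, abs_of_nonneg (by positivity : (0:ℝ) ≤ ((j:ℝ)+1)^2)]
    have h5 : |Real.exp (-((j:ℝ)+1)^4 * (σ+δ)) - Real.exp (-((j:ℝ)+1)^4 * σ)|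
        ≤ Real.exp (-((j:ℝ)+1)^4 * σ) := by
      rw [abs_sub_comm, abs_of_nonneg (by linarith)]
      linarith
    calc ((j:ℝ)+1)^2 * |Real.exp (-((j:ℝ)+1)^4 * (σ+δ)) - Real.exp (-((j:ℝ)+1)^4 * σ)|
          * |phi (j+1) x|
        ≤ ((j:ℝ)+1)^2 * Real.exp (-((j:ℝ)+1)^4 * σ) * 1 := by
          apply mul_le_mul (mul_le_mul le_rfl h5 (abs_nonneg _) (by positivity)) h1
            (abs_nonneg _) (by positivity)
      _ = ((j:ℝ)+1)^2 * Real.exp (-((j:ℝ)+1)^4 * σ) := by ring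
  -- continuity
  have hcont : Continuous (fun z => DG (σ+δ) x z - DG σ x z) := by
    have h1 := cont_DG hσδ x
    have h2 := cont_DG hσ x
    exact h1.sub h2
  -- the square integral bound
  set B : ℝ := K₀ * δ ^ (2*a) * σ ^ (-(2*a) - 5/4) with hBdef
  have hB0 : 0 < B := by
    rw [hBdef]
    have := Real.rpow_pos_of_pos hδ (2*a)
    have := Real.rpow_pos_of_pos hσ (-(2*a) - 5/4)
    positivity
  have hg_summable : Summable (fun j : ℕ => ((j:ℝ)+1)^4 * Real.exp (-(((j:ℝ)+1)^4 * σ)) ^ 2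
      * (1 - Real.exp (-(((j:ℝ)+1)^4 * δ)))^2) := by
    have haux := summable_aux 4 hσ
    simp_rw [neg_mul] at haux
    apply Summable.of_nonneg_of_le (fun j => by positivity) _ haux
    intro j
    have he1 : Real.exp (-(((j:ℝ)+1)^4 * σ)) ≤ 1 := Real.exp_le_one_iff.2 (by
      have : (0:ℝ) ≤ ((j:ℝ)+1)^4 * σ := by positivity
      linarith)
    have he1' := (Real.exp_pos (-(((j:ℝ)+1)^4 * σ))).le
    have he2 : Real.exp (-(((j:ℝ)+1)^4 * δ)) ≤ 1 := Real.exp_le_one_iff.2 (by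
      have : (0:ℝ) ≤ ((j:ℝ)+1)^4 * δ := by positivity
      linarith)
    have he2' := (Real.exp_pos (-(((j:ℝ)+1)^4 * δ))).le
    have hn4 : (0:ℝ) ≤ ((j:ℝ)+1)^4 := by positivity
    have k1 : Real.exp (-(((j:ℝ)+1)^4 * σ)) ^ 2 ≤ Real.exp (-(((j:ℝ)+1)^4 * σ)) := by
      nlinarith
    have k2 : (1 - Real.exp (-(((j:ℝ)+1)^4 * δ)))^2 ≤ 1 := by nlinarith
    have k3 := mul_le_mul k1 k2 (sq_nonneg _) he1'
    calc ((j:ℝ)+1)^4 * Real.exp (-(((j:ℝ)+1)^4 * σ)) ^ 2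
          * (1 - Real.exp (-(((j:ℝ)+1)^4 * δ)))^2
        = ((j:ℝ)+1)^4 * (Real.exp (-(((j:ℝ)+1)^4 * σ)) ^ 2
          * (1 - Real.exp (-(((j:ℝ)+1)^4 * δ)))^2) := by ring
      _ ≤ ((j:ℝ)+1)^4 * (Real.exp (-(((j:ℝ)+1)^4 * σ)) * 1) :=
          mul_le_mul_of_nonneg_left k3 hn4
      _ = ((j:ℝ)+1)^4 * Real.exp (-(((j:ℝ)+1)^4 * σ)) := by ring
  -- c j squared vs g j
  have hc_sq_le : ∀ j : ℕ, (c j)^2 ≤ ((j:ℝ)+1)^4 * Real.exp (-(((j:ℝ)+1)^4 * σ)) ^ 2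
      * (1 - Real.exp (-(((j:ℝ)+1)^4 * δ)))^2 := by
    intro j
    have hsplit : Real.exp (-((j:ℝ)+1)^4 * (σ+δ))
        = Real.exp (-(((j:ℝ)+1)^4 * σ)) * Real.exp (-(((j:ℝ)+1)^4 * δ)) := by
      rw [← Real.exp_add]
      congr 1
      ring
    have hphix : (phi (j+1) x)^2 ≤ 1 := by
      have := phi_abs_le (j+1) x
      nlinarith [abs_nonneg (phi (j+1) x), sq_abs (phi (j+1) x)]
    have hceq : (c j)^2 = ((j:ℝ)+1)^4 * Real.exp (-(((j:ℝ)+1)^4 * σ)) ^ 2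
        * (1 - Real.exp (-(((j:ℝ)+1)^4 * δ)))^2 * (phi (j+1) x)^2 := by
      rw [hcdef]
      simp only
      rw [hsplit, show -((j:ℝ)+1)^4 * σ = -(((j:ℝ)+1)^4 * σ) by ring]
      ring
    rw [hceq]
    have hpos : (0:ℝ) ≤ ((j:ℝ)+1)^4 * Real.exp (-(((j:ℝ)+1)^4 * σ)) ^ 2
        * (1 - Real.exp (-(((j:ℝ)+1)^4 * δ)))^2 := by
      have he2 : Real.exp (-(((j:ℝ)+1)^4 * δ)) ≤ 1 := Real.exp_le_one_iff.2 (by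
        have : (0:ℝ) ≤ ((j:ℝ)+1)^4 * δ := by positivity
        linarith)
      positivity
    nlinarith
  have hcsq_summable : Summable (fun j => (c j)^2) :=
    Summable.of_nonneg_of_le (fun j => sq_nonneg _) hc_sq_le hg_summable
  have hsq_int : ∫ z in (0:ℝ)..Real.pi, (DG (σ+δ) x z - DG σ x z)^2 ≤ B := by
    calc ∫ z in (0:ℝ)..Real.pi, (DG (σ+δ) x z - DG σ x z)^2
        = ∫ z in (0:ℝ)..Real.pi, (∑' j : ℕ, c j * phi (j+1) z)^2 := by
          simp_rw [hfeq]
      _ = ∑' j : ℕ, (c j)^2 := parseval habs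
      _ ≤ ∑' j : ℕ, ((j:ℝ)+1)^4 * Real.exp (-(((j:ℝ)+1)^4 * σ)) ^ 2
            * (1 - Real.exp (-(((j:ℝ)+1)^4 * δ)))^2 :=
          Summable.tsum_le_tsum hc_sq_le hcsq_summable hg_summable
      _ ≤ B := by rw [hBdef, hK₀]; exact sum_bound ha0 ha1 hσ hδ
  have hmain := integral_abs_le_sqrt hcont hB0 hsq_int
  refine hmain.trans (le_of_eq ?_)
  rw [hBdef, hK₀]
  rw [show Real.pi * (2 * Real.exp 1 * 2 ^ ((1:ℝ)/4) * δ ^ (2*a) * σ ^ (-(2*a) - 5/4))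
      = (Real.pi * (2 * Real.exp 1 * 2 ^ ((1:ℝ)/4))) * δ ^ (2*a) * σ ^ (-(2*a) - 5/4) by ring]
  have hx1 : (0:ℝ) ≤ Real.pi * (2 * Real.exp 1 * 2 ^ ((1:ℝ)/4)) := by
    have := Real.exp_pos (1:ℝ)
    have : (0:ℝ) < 2 ^ ((1:ℝ)/4) := Real.rpow_pos_of_pos (by norm_num) _
    have := Real.pi_pos
    positivity
  have hx2 : (0:ℝ) ≤ δ ^ (2*a) := (Real.rpow_pos_of_pos hδ _).le
  rw [Real.sqrt_mul (by positivity) (σ ^ (-(2*a) - 5/4)),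
    Real.sqrt_mul hx1 (δ ^ (2*a))]
  congr 1
  · congr 1
    rw [show (2*a) = a*2 by ring, Real.rpow_mul hδ.le, Real.rpow_two,
      Real.sqrt_sq (Real.rpow_pos_of_pos hδ a).le]
  · rw [Real.sqrt_eq_rpow, ← Real.rpow_mul hσ.le]
    congr 1
    ring

/-- For every `α ∈ (0, 3/8)` there is `C = C(α,T) > 0` such that for all `x ∈ [0,π]`
and `0 ≤ s < t ≤ T`,
`∫_0^s ∫_0^π |ΔG_{t−r}(x,z) − ΔG_{s−r}(x,z)| dz dr ≤ C(t−s)^α`. -/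
theorem stmt7 (T : ℝ) (hT : 0 < T) (α : ℝ) (hα : α ∈ Set.Ioo (0 : ℝ) (3 / 8)) :
    ∃ C : ℝ, 0 < C ∧ ∀ x ∈ Set.Icc (0 : ℝ) Real.pi, ∀ s t : ℝ, 0 ≤ s → s < t → t ≤ T →
      (∫ r in (0 : ℝ)..s, ∫ z in (0 : ℝ)..Real.pi,
        |DG (t - r) x z - DG (s - r) x z|) ≤ C * (t - s) ^ α := by
  obtain ⟨hα0, hα1⟩ := hα
  set K₁ : ℝ := Real.sqrt (Real.pi * (2 * Real.exp 1 * 2 ^ ((1:ℝ)/4))) with hK₁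
  have hK₁0 : 0 < K₁ := by
    apply Real.sqrt_pos.2
    have := Real.exp_pos (1:ℝ)
    have : (0:ℝ) < 2 ^ ((1:ℝ)/4) := Real.rpow_pos_of_pos (by norm_num) _
    have := Real.pi_pos
    positivity
  set γ : ℝ := α + 5/8 with hγ
  have hγ0 : 0 < γ := by rw [hγ]; linarith
  have hγ1 : γ < 1 := by rw [hγ]; linarith
  set C : ℝ := K₁ * T ^ (1 - γ) / (1 - γ) with hC
  have hC0 : 0 < C := by
    rw [hC]
    have := Real.rpow_pos_of_pos hT (1 - γ)
    apply div_pos (by positivity) (by linarith)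
  refine ⟨C, hC0, ?_⟩
  intro x hx s t hs hst htT
  have hδ : 0 < t - s := by linarith
  have hδα : 0 < (t - s) ^ α := Real.rpow_pos_of_pos hδ _
  by_cases hInt : IntervalIntegrable
      (fun r => ∫ z in (0:ℝ)..Real.pi, |DG (t-r) x z - DG (s-r) x z|) volume 0 s
  case neg =>
    rw [intervalIntegral.integral_undef hInt]
    exact le_of_lt (mul_pos hC0 hδα)
  case pos =>
  set g : ℝ → ℝ := fun r => K₁ * (t-s)^α * (s - r) ^ (-γ) with hg
  have hg_int : IntervalIntegrable g volume 0 s := by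
    have h1 : IntervalIntegrable (fun u : ℝ => u ^ (-γ)) volume 0 s :=
      intervalIntegral.intervalIntegrable_rpow' (by linarith)
    have h2 := (h1.comp_sub_left s).const_mul (K₁ * (t-s)^α)
    rw [hg]
    simpa using h2.symm
  have hae : (fun r => ∫ z in (0:ℝ)..Real.pi, |DG (t-r) x z - DG (s-r) x z|)
      ≤ᵐ[volume.restrict (Set.Icc 0 s)] g := by
    have h1 : ∀ᵐ r ∂(volume.restrict (Set.Icc (0:ℝ) s)), r ≠ s := by
      apply ae_restrict_of_ae
      rw [MeasureTheory.ae_iff]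
      have : {r : ℝ | ¬ r ≠ s} = {s} := by ext r; simp
      rw [this]
      exact measure_singleton s
    have h2 := ae_restrict_mem (μ := (volume : Measure ℝ)) (measurableSet_Icc : MeasurableSet (Set.Icc (0:ℝ) s))
    filter_upwards [h1, h2] with r hne hmem
    obtain ⟨hr0, hrs⟩ := hmem
    have hσ : 0 < s - r := by
      rcases lt_or_eq_of_le hrs with h | h
      · linarith
      · exact absurd h hne
    have key := Fr_bound (x := x) hα0 hα1 hσ hδ
    rw [show (s - r) + (t - s) = t - r by ring] at key
    exact key
  have hmono := intervalIntegral.integral_mono_ae_restrict hs hInt hg_int hae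
  refine hmono.trans ?_
  -- compute ∫ g
  have hcomp : ∫ r in (0:ℝ)..s, (s - r) ^ (-γ) = ∫ u in (0:ℝ)..s, u ^ (-γ) := by
    have := intervalIntegral.integral_comp_sub_left (a := (0:ℝ)) (b := s)
      (fun u : ℝ => u ^ (-γ)) s
    simpa using this
  have hval : ∫ u in (0:ℝ)..s, u ^ (-γ) = s ^ (1-γ) / (1-γ) := by
    rw [integral_rpow (Or.inl (by linarith : (-1:ℝ) < -γ))]
    rw [Real.zero_rpow (by linarith : -γ + 1 ≠ 0)]
    rw [show -γ + 1 = 1 - γ by ring]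
    ring
  have hgval : ∫ r in (0:ℝ)..s, g r = K₁ * (t-s)^α * (s ^ (1-γ) / (1-γ)) := by
    rw [hg]
    rw [intervalIntegral.integral_const_mul, hcomp, hval]
  rw [hgval]
  have hsT : s ^ (1-γ) ≤ T ^ (1-γ) :=
    Real.rpow_le_rpow hs (by linarith) (by linarith)
  rw [hC]
  rw [show K₁ * T ^ (1-γ) / (1-γ) * (t-s)^α = K₁ * (t-s)^α * (T ^ (1-γ) / (1-γ)) by ring]
  apply mul_le_mul_of_nonneg_left _ (by positivity)
  exact (div_le_div_iff_of_pos_right (by linarith)).2 hsT
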